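/- Let g ≥ 2 be an integer. Then the ratio l_g(n)/λ_g(n) tends to 1 as the integer n tends to infinity. -/

import Mathlib

/-- `IsGAddChain g a r d` says that `a 0 = 1, a 1, …, a r = d` is a `g`-addition chain
for `d`: each term `a i` (for `1 ≤ i ≤ r`) is a sum `a (j 1) + ⋯ + a (j k)` of `k`
earlier terms, where `2 ≤ k ≤ g` and `j 1 ≤ ⋯ ≤ j k ≤ i - 1`. -/
def IsGAddChain (g : ℕ) (a : ℕ → ℕ) (r : ℕ) (d : ℕ) : Prop :=
  a 0 = 1 ∧ a r = d ∧
  ∀ i, 1 ≤ i → i ≤ r →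
    ∃ k, 2 ≤ k ∧ k ≤ g ∧
      ∃ j : Fin k → ℕ, Monotone j ∧ (∀ t, j t ≤ i - 1) ∧
        a i = ∑ t, a (j t)

/-- `gAddChainLength g d` is `l_g(d)`, the length of a shortest `g`-addition chain for `d`. -/
noncomputable def gAddChainLength (g d : ℕ) : ℕ :=
  sInf {r | ∃ a : ℕ → ℕ, IsGAddChain g a r d}

/-- `nonzeroDigits m d` is `μ_m(d)`, the number of nonzero digits of `d` in base `m`. -/
def nonzeroDigits (m d : ℕ) : ℕ :=
  ((Nat.digits m d).filter (· ≠ 0)).length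

lemma monotone_pair {u v : ℕ} (h : u ≤ v) : Monotone ![u, v] := by
  intro s t hst
  fin_cases s <;> fin_cases t <;> simp_all <;> omega

lemma sum_pair (b : ℕ → ℕ) (u v : ℕ) : ∑ t : Fin 2, b (![u, v] t) = b u + b v := by
  simp [Fin.sum_univ_two]

lemma sum_const_fin (b : ℕ → ℕ) (g c : ℕ) : ∑ _t : Fin g, b c = g * b c := by
  simp [Finset.sum_const, mul_comm]

lemma succChainCond (g : ℕ) (hg : 2 ≤ g) (r : ℕ) :
    ∀ i, 1 ≤ i → i ≤ r →
      ∃ k, 2 ≤ k ∧ k ≤ g ∧ ∃ j : Fin k → ℕ, Monotone j ∧ (∀ t, j t ≤ i - 1) ∧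
        (fun i => i + 1) i = ∑ t, (fun i => i + 1) (j t) := by
  intro i h1 _
  refine ⟨2, le_rfl, hg, ![0, i - 1], monotone_pair (by omega), ?_, ?_⟩
  · intro t; fin_cases t <;> simp
  · show i + 1 = ∑ t : Fin 2, (![0, i - 1] t + 1)
    rw [Fin.sum_univ_two]
    simp only [Matrix.cons_val_zero, Matrix.cons_val_one, Matrix.head_cons]
    omega

lemma trivialChain (g n : ℕ) (hg : 2 ≤ g) (hn : 1 ≤ n) :
    IsGAddChain g (fun i => i + 1) (n - 1) n :=
  ⟨rfl, show n - 1 + 1 = n by omega, succChainCond g hg (n - 1)⟩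

lemma chain_le_pow {g : ℕ} (hg : 2 ≤ g) {a : ℕ → ℕ} {r n : ℕ} (h : IsGAddChain g a r n) :
    ∀ i, i ≤ r → a i ≤ g ^ i := by
  intro i
  induction i using Nat.strong_induction_on with
  | _ i ih =>
    intro hir
    rcases Nat.eq_zero_or_pos i with h0 | h1
    · subst h0; simp [h.1]
    · obtain ⟨k, hk2, hkg, j, _, hjle, heq⟩ := h.2.2 i h1 hir
      have hterm : ∀ t : Fin k, a (j t) ≤ g ^ (i - 1) := by
        intro t
        calc a (j t) ≤ g ^ (j t) := ih (j t) (by have := hjle t; omega) (by have := hjle t; omega)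
          _ ≤ g ^ (i - 1) := Nat.pow_le_pow_right (by omega) (hjle t)
      calc a i = ∑ t, a (j t) := heq
        _ ≤ ∑ _t : Fin k, g ^ (i - 1) := Finset.sum_le_sum fun t _ => hterm t
        _ = k * g ^ (i - 1) := by simp [Finset.sum_const, mul_comm]
        _ ≤ g * g ^ (i - 1) := Nat.mul_le_mul_right _ hkg
        _ = g ^ i := by rw [← pow_succ']; congr 1; omega

lemma log_le_chainLength {g n : ℕ} (hg : 2 ≤ g) (hn : 1 ≤ n) :
    Nat.log g n ≤ gAddChainLength g n := by
  have hne : {r | ∃ a, IsGAddChain g a r n}.Nonempty := ⟨n - 1, _, trivialChain g n hg hn⟩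
  obtain ⟨a, ha⟩ := Nat.sInf_mem hne
  have h1 : n ≤ g ^ sInf {r | ∃ a, IsGAddChain g a r n} := by
    have := chain_le_pow hg ha _ le_rfl
    rwa [ha.2.1] at this
  calc Nat.log g n ≤ Nat.log g (g ^ sInf {r | ∃ a, IsGAddChain g a r n}) :=
        Nat.log_mono_right h1
    _ = _ := Nat.log_pow (by omega) _

def Grounded (g m : ℕ) (a : ℕ → ℕ) (r : ℕ) : Prop :=
  (∀ i, i ≤ m - 2 → a i = i + 1) ∧ m - 2 ≤ r ∧
  ∀ i, 1 ≤ i → i ≤ r →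
    ∃ k, 2 ≤ k ∧ k ≤ g ∧ ∃ j : Fin k → ℕ, Monotone j ∧ (∀ t, j t ≤ i - 1) ∧
      a i = ∑ t, a (j t)

lemma grounded_step {g k : ℕ} (hg : 2 ≤ g) (hk : 1 ≤ k) {a : ℕ → ℕ} {r p x d : ℕ}
    (hgr : Grounded g (g ^ k) a r) (hp : p ≤ r) (hx : a p = x) (hd : d < g ^ k) :
    ∃ b, Grounded g (g ^ k) b (r + k + 1) ∧ b (r + k + 1) = x * g ^ k + d := by
  classical
  have hm2 : 2 ≤ g ^ k := by
    calc 2 = 2 ^ 1 := rfl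
    _ ≤ g ^ k := Nat.pow_le_pow_left hg 1 |>.trans (Nat.pow_le_pow_right (by omega) hk)
  set b : ℕ → ℕ := fun i => if i ≤ r then a i else if i ≤ r + k then x * g ^ (i - r) else x * g ^ k + d with hbdef
  have hble : ∀ i, i ≤ r → b i = a i := by intro i hi; simp [hbdef, hi]
  have hbmid : ∀ s, 1 ≤ s → s ≤ k → b (r + s) = x * g ^ s := by
    intro s h1 h2
    have : ¬ (r + s ≤ r) := by omega
    simp [hbdef, this, h2, Nat.add_sub_cancel_left]
  have hbend : b (r + k + 1) = x * g ^ k + d := by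
    have h1 : ¬ (r + k + 1 ≤ r) := by omega
    have h2 : ¬ (r + k + 1 ≤ r + k) := by omega
    simp [hbdef, h1, h2]
  refine ⟨b, ⟨?_, by have := hgr.2.1; omega, ?_⟩, hbend⟩
  · intro i hi
    rw [hble i (le_trans hi hgr.2.1)]
    exact hgr.1 i hi
  · intro i h1 h2
    rcases Nat.lt_or_ge r i with hri | hri
    swap
    · -- i ≤ r : reuse witness from a
      obtain ⟨kk, hkk2, hkkg, j, hmono, hjle, heq⟩ := hgr.2.2 i h1 hri
      refine ⟨kk, hkk2, hkkg, j, hmono, hjle, ?_⟩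
      rw [hble i hri, heq]
      exact Finset.sum_congr rfl fun t _ => (hble (j t) (by have := hjle t; omega)).symm
    rcases Nat.lt_or_ge (r + k) i with hrk | hrk
    · -- i = r + k + 1
      have hieq : i = r + k + 1 := by omega
      subst hieq
      rcases Nat.eq_zero_or_pos d with hd0 | hd1
      · -- d = 0 : g copies of x * g^(k-1)
        subst hd0
        have hc : ∃ c, c ≤ r + k ∧ b c = x * g ^ (k - 1) := by
          rcases Nat.lt_or_ge k 2 with hk1 | hk2
          · have : k = 1 := by omega
            subst this
            exact ⟨p, by omega, by rw [hble p hp, hx]; simp⟩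
          · exact ⟨r + (k - 1), by omega, hbmid (k - 1) (by omega) (by omega)⟩
        obtain ⟨c, hcle, hcval⟩ := hc
        refine ⟨g, hg, le_rfl, fun _ => c, monotone_const,
          fun t => by show c ≤ r + k + 1 - 1; omega, ?_⟩
        show b (r + k + 1) = ∑ _t : Fin g, b c
        rw [hbend, sum_const_fin, hcval]
        have h5 : g * (x * g ^ (k - 1)) = x * (g ^ (k - 1) * g) := by ring
        rw [h5, ← pow_succ, show k - 1 + 1 = k from by omega, Nat.add_zero]
      · -- d ≥ 1 : two terms, d and x * g^k
        refine ⟨2, le_rfl, hg, ![d - 1, r + k], monotone_pair (by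
          have := hgr.2.1; omega), ?_, ?_⟩
        · intro t; have h6 := hgr.2.1; fin_cases t <;> simp <;> omega
        · rw [hbend, sum_pair]
          have hv1 : b (d - 1) = d := by
            rw [hble (d - 1) (by have := hgr.2.1; omega)]
            rw [hgr.1 (d - 1) (by omega)]
            omega
          have hv2 : b (r + k) = x * g ^ k := hbmid k hk le_rfl
          rw [hv1, hv2, Nat.add_comm]
    · -- r + 1 ≤ i ≤ r + k : multiplication steps
      have hs1 : 1 ≤ i - r := by omega
      have hs2 : i - r ≤ k := by omega
      have hbi : b i = x * g ^ (i - r) := by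
        have h := hbmid (i - r) hs1 hs2
        rwa [show r + (i - r) = i from by omega] at h
      rcases Nat.eq_or_lt_of_le hri with hieq | hlt
      · -- i = r + 1 : g copies of x at index p
        refine ⟨g, hg, le_rfl, fun _ => p, monotone_const,
          fun t => by show p ≤ i - 1; omega, ?_⟩
        show b i = ∑ _t : Fin g, b p
        rw [hbi, sum_const_fin, hble p hp, hx, show i - r = 1 from by omega]
        ring
      · -- r + 2 ≤ i : g copies of b (i-1)
        refine ⟨g, hg, le_rfl, fun _ => i - 1, monotone_const,
          fun t => by show i - 1 ≤ i - 1; exact le_rfl, ?_⟩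
        show b i = ∑ _t : Fin g, b (i - 1)
        have hprev : b (i - 1) = x * g ^ (i - r - 1) := by
          have h := hbmid (i - r - 1) (by omega) (by omega)
          rwa [show r + (i - r - 1) = i - 1 from by omega] at h
        obtain ⟨s, hs⟩ : ∃ s, i - r = s + 1 := ⟨i - r - 1, by omega⟩
        rw [hbi, sum_const_fin, hprev, show i - r - 1 = s from by omega, hs, pow_succ]
        ring

lemma pow_two_le {g k : ℕ} (hg : 2 ≤ g) (hk : 1 ≤ k) : 2 ≤ g ^ k :=
  calc 2 = 2 ^ 1 := rfl
  _ ≤ g ^ k := (Nat.pow_le_pow_left hg 1).trans (Nat.pow_le_pow_right (by omega) hk)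

lemma horner {g k : ℕ} (hg : 2 ≤ g) (hk : 1 ≤ k) :
    ∀ n, 1 ≤ n → ∃ a r p, Grounded g (g ^ k) a r ∧ p ≤ r ∧ a p = n ∧
      r ≤ (g ^ k - 2) + (k + 1) * Nat.log (g ^ k) n ∧ (g ^ k ≤ n → p = r) := by
  intro n
  induction n using Nat.strong_induction_on with
  | _ n ih =>
    intro hn
    have hm2 : 2 ≤ g ^ k := pow_two_le hg hk
    rcases Nat.lt_or_ge n (g ^ k) with hlt | hge
    · refine ⟨fun i => i + 1, g ^ k - 2, n - 1,
        ⟨fun i _ => rfl, le_rfl, succChainCond g hg _⟩, by omega,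
        show n - 1 + 1 = n by omega, by omega, by omega⟩
    · have hq1 : 1 ≤ n / g ^ k := (Nat.one_le_div_iff (by omega)).2 hge
      have hqlt : n / g ^ k < n := Nat.div_lt_self (by omega) (by omega)
      obtain ⟨a, r, p, hgr, hp, hap, hr, _⟩ := ih _ hqlt hq1
      obtain ⟨b, hgrb, hb⟩ := grounded_step hg hk hgr hp hap (Nat.mod_lt _ (by omega))
      refine ⟨b, r + k + 1, r + k + 1, hgrb, le_rfl, ?_, ?_, fun _ => rfl⟩
      · rw [hb, mul_comm, Nat.div_add_mod]
      · have hlog : Nat.log (g ^ k) (n / g ^ k) = Nat.log (g ^ k) n - 1 :=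
          Nat.log_div_base _ _
        have hpos : 0 < Nat.log (g ^ k) n := Nat.log_pos (by omega) hge
        have hmul : (k + 1) * Nat.log (g ^ k) n
            = (k + 1) * Nat.log (g ^ k) (n / g ^ k) + (k + 1) := by
          rw [hlog]
          have h7 : Nat.log (g ^ k) n = (Nat.log (g ^ k) n - 1) + 1 := by omega
          calc (k + 1) * Nat.log (g ^ k) n
              = (k + 1) * ((Nat.log (g ^ k) n - 1) + 1) := by rw [← h7]
            _ = (k + 1) * (Nat.log (g ^ k) n - 1) + (k + 1) := by ring
        omega

lemma chainLength_le {g k n : ℕ} (hg : 2 ≤ g) (hk : 1 ≤ k) (hn : 1 ≤ n) :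
    gAddChainLength g n ≤ g ^ k + (k + 1) * Nat.log (g ^ k) n := by
  have hm2 : 2 ≤ g ^ k := pow_two_le hg hk
  rcases Nat.lt_or_ge n (g ^ k) with hlt | hge
  · exact le_trans (Nat.sInf_le ⟨_, trivialChain g n hg hn⟩) (by omega)
  · obtain ⟨a, r, p, hgr, hp, hap, hr, hpr⟩ := horner hg hk n hn
    rcases hpr hge with rfl
    have hch : IsGAddChain g a p n := by
      refine ⟨?_, hap, hgr.2.2⟩
      have := hgr.1 0 (Nat.zero_le _)
      simpa using this
    exact le_trans (Nat.sInf_le ⟨a, hch⟩) (by omega)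

lemma mul_log_le {g k n : ℕ} (hg : 2 ≤ g) (hk : 1 ≤ k) (hn : 1 ≤ n) :
    k * Nat.log (g ^ k) n ≤ Nat.log g n := by
  have h1 : (g ^ k) ^ Nat.log (g ^ k) n ≤ n := Nat.pow_log_le_self _ (by omega)
  rw [← pow_mul] at h1
  calc k * Nat.log (g ^ k) n
      = Nat.log g (g ^ (k * Nat.log (g ^ k) n)) := (Nat.log_pow (by omega) _).symm
    _ ≤ Nat.log g n := Nat.log_mono_right h1


/-- for an integer `g ≥ 2`, `l_g(n) / λ_g(n) → 1` as `n → ∞`. -/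
theorem gAddChainLength_div_log_tendsto_one (g : ℕ) (hg : 2 ≤ g) :
    Filter.Tendsto (fun n : ℕ => (gAddChainLength g n : ℝ) / (Nat.log g n : ℝ))
      Filter.atTop (nhds 1) := by
  rw [Metric.tendsto_atTop]
  intro ε hε
  obtain ⟨k0, hk0⟩ := exists_nat_gt (2 / ε)
  set k := k0 + 1 with hkdef
  have hk1 : 1 ≤ k := by omega
  have hkpos : (0:ℝ) < (k:ℝ) := by positivity
  have hkR : 2 / ε < (k : ℝ) := by rw [hkdef]; push_cast; push_cast at hk0; linarith
  have hkε : (1 : ℝ) / (k:ℝ) < ε / 2 := by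
    rw [div_lt_div_iff₀ hkpos (by norm_num : (0:ℝ) < 2)]
    have h0 := (div_lt_iff₀ hε).1 hkR
    linarith
  set M : ℕ := ⌈(2 * (g : ℝ) ^ k) / ε⌉₊ + 1 with hMdef
  refine ⟨g ^ M, fun n hn => ?_⟩
  have hgM1 : 1 ≤ g ^ M := Nat.one_le_pow _ _ (by omega)
  have hn1 : 1 ≤ n := le_trans hgM1 hn
  have hML : M ≤ Nat.log g n := (Nat.le_log_iff_pow_le (by omega) (by omega)).2 hn
  set L := Nat.log g n with hLdef
  set f := gAddChainLength g n with hfdef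
  have hM1 : 1 ≤ M := by omega
  have hL1 : 1 ≤ L := le_trans hM1 hML
  have hlow : L ≤ f := log_le_chainLength hg hn1
  have ht : k * Nat.log (g ^ k) n ≤ L := mul_log_le hg hk1 hn1
  have htdiv : Nat.log (g ^ k) n ≤ L / k :=
    (Nat.le_div_iff_mul_le (by omega)).2 (by rw [Nat.mul_comm]; exact ht)
  have hup2 : f ≤ g ^ k + L + L / k := by
    have h8 := chainLength_le (g := g) (k := k) (n := n) hg hk1 hn1
    have h9 : (k + 1) * Nat.log (g ^ k) n
        = k * Nat.log (g ^ k) n + Nat.log (g ^ k) n := by ring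
    omega
  have hLpos : (0:ℝ) < (L:ℝ) := by exact_mod_cast hL1
  have hLne : (L:ℝ) ≠ 0 := ne_of_gt hLpos
  have hkne : (k:ℝ) ≠ 0 := ne_of_gt hkpos
  have hone : (1:ℝ) ≤ (f:ℝ)/(L:ℝ) := by
    rw [le_div_iff₀ hLpos, one_mul]; exact_mod_cast hlow
  rw [Real.dist_eq, abs_of_nonneg (by linarith)]
  have hcast : (f : ℝ) ≤ (g:ℝ)^k + (L:ℝ) + ((L / k : ℕ) : ℝ) := by
    have := hup2
    push_cast
    exact_mod_cast this
  have hdivk : ((L / k : ℕ) : ℝ) ≤ (L:ℝ)/(k:ℝ) := Nat.cast_div_le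
  have hnum : (f : ℝ) ≤ (g:ℝ)^k + (L:ℝ) + (L:ℝ)/(k:ℝ) := by linarith
  have hsplit : ((g:ℝ)^k + (L:ℝ) + (L:ℝ)/(k:ℝ))/(L:ℝ)
      = (g:ℝ)^k/(L:ℝ) + 1 + 1/(k:ℝ) := by
    rw [add_div, add_div, div_self hLne]
    congr 1
    rw [div_div, mul_comm, ← div_div, div_self hLne]
  have hgkL : (g:ℝ)^k / (L:ℝ) < ε / 2 := by
    have hceil : (2 * (g:ℝ)^k)/ε < (M:ℝ) := by
      have h12 : (2 * (g:ℝ)^k)/ε ≤ (⌈(2 * (g : ℝ) ^ k) / ε⌉₊ : ℝ) := Nat.le_ceil _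
      have h13 : ((⌈(2 * (g : ℝ) ^ k) / ε⌉₊ : ℕ) : ℝ) < (M:ℝ) := by
        rw [hMdef]; push_cast; linarith
      linarith
    have hLM : (M:ℝ) ≤ (L:ℝ) := by exact_mod_cast hML
    rw [div_lt_iff₀ hLpos]
    have h10 : 2*(g:ℝ)^k < ε * (L:ℝ) := by
      have h14 : 2*(g:ℝ)^k = ε * ((2*(g:ℝ)^k)/ε) := by field_simp
      calc 2*(g:ℝ)^k = ε * ((2*(g:ℝ)^k)/ε) := h14
        _ < ε * (M:ℝ) := by exact mul_lt_mul_of_pos_left hceil hε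
        _ ≤ ε * (L:ℝ) := mul_le_mul_of_nonneg_left hLM (le_of_lt hε)
    linarith
  have hfinal : (f:ℝ)/(L:ℝ) ≤ (g:ℝ)^k/(L:ℝ) + 1 + 1/(k:ℝ) := by
    rw [← hsplit]
    gcongr
  linarith
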